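/- In the setting of an empty rectangle move (σ, τ = σ∘(i j) as above, with no interior dots), and with two decoration sets O, X ⊆ ℤ² of odd points, the Alexander grading A(x) := (M_O(x) − M_X(x))/2 − (n−ℓ)/2 satisfies A(x_σ) − A(x_τ) = #(X ∩ R) − #(O ∩ R), where R = {b : 2i < b₁ < 2j, 2σ(i) < b₂ < 2σ(j)} and ℓ, n are constants. -/

import Mathlib

/-- `2·J(A,B)` is the number of pairs `(a,b) ∈ A × B` with `(b₁-a₁)(b₂-a₂) > 0`. -/
def J (A B : Finset (ℤ × ℤ)) : ℚ :=
  (((A ×ˢ B).filter (fun p => 0 < (p.2.1 - p.1.1) * (p.2.2 - p.1.2))).card : ℚ) / 2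

/-- The Maslov grading `M_B(A) = J(A,A) - 2J(A,B) + J(B,B) + 1`. -/
def M (B A : Finset (ℤ × ℤ)) : ℚ := J A A - 2 * J A B + J B B + 1

/-- The Alexander grading `A(x) = (M_O(x) - M_X(x))/2 - (n - ℓ)/2`. -/
def alexander (O X : Finset (ℤ × ℤ)) (n ℓ : ℕ) (x : Finset (ℤ × ℤ)) : ℚ :=
  (M O x - M X x) / 2 - ((n : ℚ) - (ℓ : ℚ)) / 2

/-- The set of dots of the generator associated to `σ`: `{(2l, 2σ(l)) : l ∈ Fin n}`. -/
def dots {n : ℕ} (σ : Equiv.Perm (Fin n)) : Finset (ℤ × ℤ) :=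
  Finset.univ.image (fun l : Fin n => (2 * ((l : ℕ) : ℤ), 2 * ((σ l : ℕ) : ℤ)))

/-- Indicator (as an integer) of `(b₁-a₁)(b₂-a₂) > 0`. -/
def ind (a b : ℤ × ℤ) : ℤ := if 0 < (b.1 - a.1) * (b.2 - a.2) then 1 else 0

/-- `2·J(dots σ, B)` written as a double sum. -/
def Nc {n : ℕ} (σ : Equiv.Perm (Fin n)) (B : Finset (ℤ × ℤ)) : ℤ :=
  ∑ l : Fin n, ∑ b ∈ B, ind (2 * ((l : ℕ) : ℤ), 2 * ((σ l : ℕ) : ℤ)) b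

lemma cardA {n : ℕ} (σ : Equiv.Perm (Fin n)) (B : Finset (ℤ × ℤ)) :
    ((((dots σ) ×ˢ B).filter (fun p => 0 < (p.2.1 - p.1.1) * (p.2.2 - p.1.2))).card : ℤ)
      = Nc σ B := by
  rw [Finset.card_filter, Finset.sum_product]
  unfold dots
  rw [Finset.sum_image (by intro a _ b _ h; simp only [Prod.mk.injEq] at h; omega)]
  push_cast [Nc, ind, apply_ite (Nat.cast : ℕ → ℤ)]
  rfl

lemma ind_ne (a b : ℤ) (ha : a ≠ 0) (hb : b ≠ 0) :
    (if 0 < a * b then (1:ℤ) else 0) = if (0 < a ↔ 0 < b) then 1 else 0 := by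
  rcases ha.lt_or_gt with h | h <;> rcases hb.lt_or_gt with h' | h'
  · rw [if_pos (mul_pos_of_neg_of_neg h h'), if_pos (by omega)]
  · rw [if_neg (by nlinarith), if_neg (by omega)]
  · rw [if_neg (by nlinarith), if_neg (by omega)]
  · rw [if_pos (mul_pos h h'), if_pos (by omega)]

lemma key_arith (p q r s x y : ℤ) (hpq : p < q) (hrs : r < s)
    (hxp : x ≠ p) (hxq : x ≠ q) (hyr : y ≠ r) (hys : y ≠ s) :
    ((if 0 < (x - q) * (y - r) then (1:ℤ) else 0) - (if 0 < (x - p) * (y - r) then 1 else 0))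
    + ((if 0 < (x - p) * (y - s) then 1 else 0) - (if 0 < (x - q) * (y - s) then 1 else 0))
    = -(if p < x ∧ x < q ∧ r < y ∧ y < s then 2 else 0) := by
  rw [ind_ne _ _ (by omega) (by omega), ind_ne _ _ (by omega) (by omega),
      ind_ne _ _ (by omega) (by omega), ind_ne _ _ (by omega) (by omega)]
  split_ifs <;> omega

lemma key {n : ℕ} (σ : Equiv.Perm (Fin n)) (i j : Fin n) (hij : i < j) (hσ : σ i < σ j)
    (B : Finset (ℤ × ℤ)) (hB : ∀ b ∈ B, Odd b.1 ∧ Odd b.2) :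
    Nc (σ * Equiv.swap i j) B
      = Nc σ B - 2 * ((B.filter (fun b => 2 * ((i : ℕ) : ℤ) < b.1 ∧ b.1 < 2 * ((j : ℕ) : ℤ) ∧
            2 * ((σ i : ℕ) : ℤ) < b.2 ∧ b.2 < 2 * ((σ j : ℕ) : ℤ))).card : ℤ) := by
  have hne : i ≠ j := Fin.ne_of_lt hij
  have hijv : ((i : ℕ) : ℤ) < ((j : ℕ) : ℤ) := by exact_mod_cast Fin.lt_iff_val_lt_val.mp hij
  have hσv : ((σ i : ℕ) : ℤ) < ((σ j : ℕ) : ℤ) := by exact_mod_cast Fin.lt_iff_val_lt_val.mp hσ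
  have hfil : (2:ℤ) * ((B.filter (fun b => 2 * ((i : ℕ) : ℤ) < b.1 ∧ b.1 < 2 * ((j : ℕ) : ℤ) ∧
            2 * ((σ i : ℕ) : ℤ) < b.2 ∧ b.2 < 2 * ((σ j : ℕ) : ℤ))).card : ℤ)
      = ∑ b ∈ B, (if 2 * ((i : ℕ) : ℤ) < b.1 ∧ b.1 < 2 * ((j : ℕ) : ℤ) ∧
            2 * ((σ i : ℕ) : ℤ) < b.2 ∧ b.2 < 2 * ((σ j : ℕ) : ℤ) then (2:ℤ) else 0) := by
    rw [← Finset.sum_filter, Finset.sum_const, nsmul_eq_mul]; ring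
  unfold Nc
  rw [Finset.sum_comm, Finset.sum_comm (γ := Fin n), hfil, ← Finset.sum_sub_distrib]
  apply Finset.sum_congr rfl
  intro b hb
  obtain ⟨hb1, hb2⟩ := hB b hb
  have reidx : ∑ l : Fin n, ind (2 * ((l : ℕ) : ℤ), 2 * (((σ * Equiv.swap i j) l : ℕ) : ℤ)) b
      = ∑ l : Fin n, ind (2 * (((Equiv.swap i j l : Fin n) : ℕ) : ℤ), 2 * ((σ l : ℕ) : ℤ)) b := by
    apply Fintype.sum_equiv (Equiv.swap i j)
    intro l
    simp [Equiv.Perm.mul_apply, Equiv.swap_apply_self]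
  rw [reidx]
  have hsupp : ∑ l : Fin n,
        (ind (2 * (((Equiv.swap i j l : Fin n) : ℕ) : ℤ), 2 * ((σ l : ℕ) : ℤ)) b
          - ind (2 * ((l : ℕ) : ℤ), 2 * ((σ l : ℕ) : ℤ)) b)
      = -(if 2 * ((i : ℕ) : ℤ) < b.1 ∧ b.1 < 2 * ((j : ℕ) : ℤ) ∧
            2 * ((σ i : ℕ) : ℤ) < b.2 ∧ b.2 < 2 * ((σ j : ℕ) : ℤ) then (2:ℤ) else 0) := by
    rw [← Finset.sum_subset (Finset.subset_univ ({i, j} : Finset (Fin n)))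
        (by
          intro x _ hx
          simp only [Finset.mem_insert, Finset.mem_singleton, not_or] at hx
          rw [Equiv.swap_apply_of_ne_of_ne hx.1 hx.2, sub_self])]
    rw [Finset.sum_pair hne, Equiv.swap_apply_left, Equiv.swap_apply_right]
    have h1 : b.1 ≠ 2 * ((i : ℕ) : ℤ) := by rcases hb1 with ⟨u, hu⟩; omega
    have h2 : b.1 ≠ 2 * ((j : ℕ) : ℤ) := by rcases hb1 with ⟨u, hu⟩; omega
    have h3 : b.2 ≠ 2 * ((σ i : ℕ) : ℤ) := by rcases hb2 with ⟨u, hu⟩; omega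
    have h4 : b.2 ≠ 2 * ((σ j : ℕ) : ℤ) := by rcases hb2 with ⟨u, hu⟩; omega
    have := key_arith (2 * ((i : ℕ) : ℤ)) (2 * ((j : ℕ) : ℤ))
      (2 * ((σ i : ℕ) : ℤ)) (2 * ((σ j : ℕ) : ℤ)) b.1 b.2
      (by omega) (by omega) h1 h2 h3 h4
    simp only [ind]
    linarith [this]
  have hdist := Finset.sum_sub_distrib (s := (Finset.univ : Finset (Fin n)))
    (f := fun l => ind (2 * (((Equiv.swap i j l : Fin n) : ℕ) : ℤ), 2 * ((σ l : ℕ) : ℤ)) b)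
    (g := fun l => ind (2 * ((l : ℕ) : ℤ), 2 * ((σ l : ℕ) : ℤ)) b)
  rw [hdist] at hsupp
  linarith [hsupp]

/-- For an empty rectangle move, the Alexander grading satisfies
`A(x_σ) - A(x_τ) = #(X ∩ R) - #(O ∩ R)` where `R` is the rectangle spanned by the
swapped dots. -/
theorem alexander_empty_rectangle (n : ℕ) (σ : Equiv.Perm (Fin n)) (i j : Fin n)
    (hij : i < j) (hσ : σ i < σ j)
    (hempty : ¬ ∃ k : Fin n, i < k ∧ k < j ∧ σ i < σ k ∧ σ k < σ j)
    (O X : Finset (ℤ × ℤ))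
    (hO : ∀ b ∈ O, Odd b.1 ∧ Odd b.2) (hX : ∀ b ∈ X, Odd b.1 ∧ Odd b.2)
    (ℓ : ℕ) :
    alexander O X n ℓ (dots σ) - alexander O X n ℓ (dots (σ * Equiv.swap i j))
      = ((X.filter (fun b => 2 * ((i : ℕ) : ℤ) < b.1 ∧ b.1 < 2 * ((j : ℕ) : ℤ) ∧
            2 * ((σ i : ℕ) : ℤ) < b.2 ∧ b.2 < 2 * ((σ j : ℕ) : ℤ))).card : ℚ)
        - ((O.filter (fun b => 2 * ((i : ℕ) : ℤ) < b.1 ∧ b.1 < 2 * ((j : ℕ) : ℤ) ∧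
            2 * ((σ i : ℕ) : ℤ) < b.2 ∧ b.2 < 2 * ((σ j : ℕ) : ℤ))).card : ℚ) := by
  have hJ : ∀ (σ' : Equiv.Perm (Fin n)) (B : Finset (ℤ × ℤ)),
      J (dots σ') B = ((Nc σ' B : ℤ) : ℚ) / 2 := by
    intro σ' B
    unfold J
    congr 1
    exact_mod_cast cardA σ' B
  have hO' : ((Nc (σ * Equiv.swap i j) O : ℤ) : ℚ)
      = ((Nc σ O : ℤ) : ℚ) - 2 * ((O.filter (fun b => 2 * ((i : ℕ) : ℤ) < b.1 ∧
          b.1 < 2 * ((j : ℕ) : ℤ) ∧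
          2 * ((σ i : ℕ) : ℤ) < b.2 ∧ b.2 < 2 * ((σ j : ℕ) : ℤ))).card : ℚ) := by
    exact_mod_cast congrArg (fun z : ℤ => (z : ℚ)) (key σ i j hij hσ O hO)
  have hX' : ((Nc (σ * Equiv.swap i j) X : ℤ) : ℚ)
      = ((Nc σ X : ℤ) : ℚ) - 2 * ((X.filter (fun b => 2 * ((i : ℕ) : ℤ) < b.1 ∧
          b.1 < 2 * ((j : ℕ) : ℤ) ∧
          2 * ((σ i : ℕ) : ℤ) < b.2 ∧ b.2 < 2 * ((σ j : ℕ) : ℤ))).card : ℚ) := by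
    exact_mod_cast congrArg (fun z : ℤ => (z : ℚ)) (key σ i j hij hσ X hX)
  simp only [alexander, M, hJ]
  linarith [hO', hX']
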